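/- For every q ∈ (0,1) there exists a constant C(q) > 0, depending only on q, such that the following holds: for all integers p ≥ M ≥ 1, let U_1, …, U_p be {0,1}-valued random variables with U_j = 1 deterministically for j ≤ M and with (U_j)_{M < j ≤ p} i.i.d. Bernoulli(1/2). For k ∈ {1,…,p} set P_k = ∑_{i=1}^k U_i, and define ψ = max{k ∈ {1,…,p} : k − P_k + 1 ≤ q·P_k}, with ψ = 0 if no such k exists. Then E[ψ] ≤ C(q)·M. -/

import Mathlib

open MeasureTheory
open scoped Classical ENNReal

noncomputable def seqStepPsi (p : ℕ) (q : ℝ) (u : ℕ → ℝ) : ℕ :=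
  ((Finset.Icc 1 p).filter (fun (k : ℕ) =>
    (k : ℝ) - (∑ i ∈ Finset.Icc 1 k, u i) + 1 ≤ q * ∑ i ∈ Finset.Icc 1 k, u i)).sup id

lemma seqStepPsi_le_aux (p N : ℕ) (q : ℝ) (u : ℕ → ℝ) :
    (seqStepPsi p q u : ℝ) ≤ N + ∑ k ∈ Finset.Icc 1 p,
      (if (N < k ∧ ((k : ℝ) - (∑ i ∈ Finset.Icc 1 k, u i) + 1
          ≤ q * ∑ i ∈ Finset.Icc 1 k, u i))
        then (k : ℝ) else 0) := by
  have h : seqStepPsi p q u ≤ N + ∑ k ∈ Finset.Icc 1 p,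
      (if (N < k ∧ ((k : ℝ) - (∑ i ∈ Finset.Icc 1 k, u i) + 1
          ≤ q * ∑ i ∈ Finset.Icc 1 k, u i))
        then k else 0) := by
    unfold seqStepPsi
    refine Finset.sup_le fun k hk => ?_
    rw [Finset.mem_filter] at hk
    by_cases hN : N < k
    · have hle : (fun k => if (N < k ∧ ((k : ℝ) - (∑ i ∈ Finset.Icc 1 k, u i) + 1
          ≤ q * ∑ i ∈ Finset.Icc 1 k, u i)) then k else 0) k ≤ ∑ k ∈ Finset.Icc 1 p,
          (if (N < k ∧ ((k : ℝ) - (∑ i ∈ Finset.Icc 1 k, u i) + 1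
          ≤ q * ∑ i ∈ Finset.Icc 1 k, u i)) then k else 0) :=
        Finset.single_le_sum (f := fun k => if (N < k ∧ ((k : ℝ) - (∑ i ∈ Finset.Icc 1 k, u i) + 1
          ≤ q * ∑ i ∈ Finset.Icc 1 k, u i)) then k else 0) (fun i _ => Nat.zero_le _) hk.1
      simp only [if_pos (And.intro hN hk.2)] at hle
      exact le_trans hle (Nat.le_add_left _ _)
    · exact le_trans (le_of_not_gt hN) (Nat.le_add_right _ _)
  calc (seqStepPsi p q u : ℝ) ≤ ((N + ∑ k ∈ Finset.Icc 1 p,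
      (if (N < k ∧ ((k : ℝ) - (∑ i ∈ Finset.Icc 1 k, u i) + 1
          ≤ q * ∑ i ∈ Finset.Icc 1 k, u i))
        then k else 0) : ℕ) : ℝ) := by exact_mod_cast h
    _ = _ := by
      push_cast [apply_ite (fun (n : ℕ) => (n : ℝ))]
      ring

lemma mgf_bernoulli_centered {Ω : Type} [MeasurableSpace Ω] (μ : Measure Ω)
    [IsProbabilityMeasure μ] (X : Ω → ℝ) (hX : Measurable X)
    (hvals : ∀ ω, X ω = 0 ∨ X ω = 1) (hhalf : μ {ω | X ω = 1} = 1/2) (t : ℝ) :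
    ProbabilityTheory.mgf (fun ω => X ω - 1/2) μ t ≤ Real.exp (t^2/8) := by
  have hA : MeasurableSet {ω | X ω = 1} := hX (measurableSet_singleton 1)
  have hAc : {ω | X ω = 1}ᶜ = {ω | X ω = 0} := by
    ext ω
    rcases hvals ω with h | h <;> simp [h]
  have hfun : (fun ω => Real.exp (t * (X ω - 1/2)))
      = fun ω => Set.indicator {ω | X ω = 1} (fun _ => Real.exp (t * (1/2))) ω
        + Set.indicator {ω | X ω = 1}ᶜ (fun _ => Real.exp (t * (-(1/2)))) ω := by
    funext ω
    rcases hvals ω with h | h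
    · rw [Set.indicator_of_notMem (by simp [h]), Set.indicator_of_mem (by simp [hAc, h])]
      rw [h]; norm_num
    · rw [Set.indicator_of_mem (by simp [h]), Set.indicator_of_notMem (by simp [hAc, h])]
      rw [h]; norm_num
  have hμc : μ {ω | X ω = 1}ᶜ = 1/2 := by
    rw [prob_compl_eq_one_sub hA, hhalf]
    exact ENNReal.sub_half (by norm_num)
  have hint1 : Integrable (fun ω => Set.indicator {ω | X ω = 1}
      (fun _ => Real.exp (t * (1/2))) ω) μ := (integrable_const _).indicator hA
  have hint2 : Integrable (fun ω => Set.indicator {ω | X ω = 1}ᶜ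
      (fun _ => Real.exp (t * (-(1/2)))) ω) μ := (integrable_const _).indicator hA.compl
  have hhalfR : ((1/2 : ℝ≥0∞)).toReal = (1/2 : ℝ) := by
    simp [ENNReal.toReal_div]
  have hval : ProbabilityTheory.mgf (fun ω => X ω - 1/2) μ t
      = Real.cosh (t/2) := by
    rw [ProbabilityTheory.mgf]
    show (∫ ω, Real.exp (t * (X ω - 1/2)) ∂μ) = _
    rw [hfun, integral_add hint1 hint2, integral_indicator_const _ hA,
      integral_indicator_const _ hA.compl, measureReal_def, measureReal_def, hhalf, hμc, hhalfR, Real.cosh_eq]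
    rw [smul_eq_mul, smul_eq_mul, show t * (1/2) = t/2 by ring,
      show t * (-(1/2)) = -(t/2) by ring]
    ring
  rw [hval]
  have := Real.cosh_le_exp_half_sq (t/2)
  calc Real.cosh (t/2) ≤ Real.exp ((t/2)^2/2) := this
    _ = Real.exp (t^2/8) := by ring_nf

theorem expected_seqStepPsi_le
    (q : ℝ) (hq0 : 0 < q) (hq1 : q < 1) :
    ∃ Cq : ℝ, 0 < Cq ∧
      ∀ (p M : ℕ), 1 ≤ M → M ≤ p →
      ∀ (Ω : Type) (_ : MeasurableSpace Ω) (μ : Measure Ω),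
        IsProbabilityMeasure μ →
      ∀ U : ℕ → Ω → ℝ,
        (∀ j, Measurable (U j)) →
        (∀ j, 1 ≤ j → j ≤ M → ∀ ω, U j ω = 1) →
        (∀ j, M < j → j ≤ p → ∀ ω, U j ω = 0 ∨ U j ω = 1) →
        (∀ j, M < j → j ≤ p → μ {ω | U j ω = 1} = 1 / 2) →
        ProbabilityTheory.iIndepFun
          (fun j : {j : ℕ // M < j ∧ j ≤ p} => U j.1) μ →
        ∫ ω, (seqStepPsi p q (fun i => U i ω) : ℝ) ∂μ ≤ Cq * M := by
  have h1q : (0:ℝ) < 1 + q := by linarith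
  set δ : ℝ := (1 - q) / (2 * (1 + q)) with hδdef
  have hδ : 0 < δ := by
    apply div_pos <;> linarith
  set ε : ℝ := δ / 2 with hεdef
  have hε : 0 < ε := by positivity
  set ρ : ℝ := Real.exp (-(2 * ε^2)) with hρdef
  have hρ0 : 0 < ρ := Real.exp_pos _
  have hρ1 : ρ < 1 := by
    rw [hρdef]
    exact Real.exp_lt_one_iff.mpr (by nlinarith)
  have hsum : Summable (fun k : ℕ => (k:ℝ) * ρ ^ k) := by
    have := summable_pow_mul_geometric_of_norm_lt_one (R := ℝ) 1
      (r := ρ) (by rw [Real.norm_eq_abs, abs_of_pos hρ0]; exact hρ1)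
    simpa using this
  set C₁ : ℝ := ∑' k : ℕ, (k:ℝ) * ρ ^ k with hC₁def
  have hC₁ : 0 ≤ C₁ := tsum_nonneg fun k => by positivity
  set c : ℕ := ⌈1/δ⌉₊ + 1 with hcdef
  have hcpos : (0:ℝ) < c := by
    have : 0 < c := by omega
    exact_mod_cast this
  refine ⟨(c:ℝ) + C₁, by linarith, ?_⟩
  intro p M hM hMp Ω mΩ μ hμprob U hUmeas hUone hUvals hUhalf hUindep
  set N := c * M with hNdef
  -- the Chernoff-type bound on the probability of the SeqStep condition at k
  have key : ∀ k, N < k → k ≤ p →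
      (μ {ω | (k:ℝ) - (∑ i ∈ Finset.Icc 1 k, U i ω) + 1
        ≤ q * ∑ i ∈ Finset.Icc 1 k, U i ω}).toReal ≤ ρ ^ k := by
    intro k hNk hkp
    have hMk : M < k := lt_of_le_of_lt (Nat.le_mul_of_pos_left M (by omega)) hNk
    set T : Ω → ℝ := fun ω => ∑ i ∈ Finset.Ioc M k, (U i ω - 1/2) with hTdef
    have hTmeas : Measurable T :=
      Finset.measurable_sum _ (fun i _ => (hUmeas i).sub measurable_const)
    -- inclusion into a large-deviation event for T
    have hincl : {ω | (k:ℝ) - (∑ i ∈ Finset.Icc 1 k, U i ω) + 1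
          ≤ q * ∑ i ∈ Finset.Icc 1 k, U i ω} ⊆ {ω | ε * k ≤ T ω} := by
      intro ω hω
      simp only [Set.mem_setOf_eq] at hω ⊢
      have hone : ∑ i ∈ Finset.Ioc 0 M, U i ω = (M:ℝ) := by
        rw [Finset.sum_congr rfl (fun i hi => hUone i (Finset.mem_Ioc.1 hi).1
          (Finset.mem_Ioc.1 hi).2 ω), Finset.sum_const, Nat.card_Ioc]
        simp
      have htwo : ∑ i ∈ Finset.Ioc M k, U i ω = T ω + ((k:ℝ) - (M:ℝ))/2 := by
        have h1 : T ω = (∑ i ∈ Finset.Ioc M k, U i ω) - ((k - M : ℕ):ℝ) * (1/2) := by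
          simp only [hTdef, Finset.sum_sub_distrib, Finset.sum_const, Nat.card_Ioc,
            nsmul_eq_mul]
        rw [h1, Nat.cast_sub hMk.le]
        ring
      have hsplit : ∑ i ∈ Finset.Icc 1 k, U i ω = (M:ℝ)/2 + (k:ℝ)/2 + T ω := by
        rw [show Finset.Icc 1 k = Finset.Ioc 0 k from Finset.Icc_add_one_left_eq_Ioc 0 k,
          ← Finset.sum_Ioc_consecutive (fun i => U i ω) (Nat.zero_le M) hMk.le,
          hone, htwo]
        ring
      rw [hsplit] at hω
      -- M ≤ δ k
      have hck : (c:ℝ) * M ≤ (k:ℝ) := by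
        have h0 : c * M ≤ k := hNk.le
        exact_mod_cast h0
      have hcδ : 1 ≤ δ * c := by
        have h1 : (1/δ : ℝ) ≤ (⌈1/δ⌉₊ : ℝ) := Nat.le_ceil _
        have h2 : (1/δ : ℝ) ≤ (c:ℝ) := by
          refine le_trans h1 ?_
          exact_mod_cast Nat.le_succ _
        rw [div_le_iff₀ hδ] at h2
        linarith
      have hMδk : (M:ℝ) ≤ δ * k := by
        nlinarith [mul_le_mul_of_nonneg_left hck hδ.le,
          mul_le_mul_of_nonneg_right hcδ (Nat.cast_nonneg M : (0:ℝ) ≤ (M:ℝ))]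
      have hδid : 2*(1+q)*δ = 1-q := by
        rw [hδdef]; field_simp
      have hMδk' : 2*(1+q)*M ≤ (1-q)*k := by
        calc 2*(1+q)*(M:ℝ) ≤ 2*(1+q)*(δ*k) := by
              have h2q : (0:ℝ) ≤ 2*(1+q) := by linarith
              exact mul_le_mul_of_nonneg_left hMδk h2q
          _ = (1-q)*k := by rw [← hδid]; ring
      have hε_eq : ε = (1-q)/(4*(1+q)) := by
        rw [hεdef, hδdef, div_div]
        congr 1
        ring
      rw [hε_eq, div_mul_eq_mul_div, div_le_iff₀ (by linarith : (0:ℝ) < 4*(1+q))]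
      linarith
    -- boundedness and integrability
    have hTbd : ∀ ω, |T ω| ≤ (k:ℝ) := by
      intro ω
      calc |T ω| ≤ ∑ i ∈ Finset.Ioc M k, |U i ω - 1/2| := Finset.abs_sum_le_sum_abs _ _
        _ ≤ ∑ i ∈ Finset.Ioc M k, 1 := by
            refine Finset.sum_le_sum fun i hi => ?_
            rcases hUvals i (Finset.mem_Ioc.1 hi).1
              (le_trans (Finset.mem_Ioc.1 hi).2 hkp) ω with h | h <;>
              rw [h, abs_le] <;> constructor <;> norm_num
        _ = ((k - M : ℕ):ℝ) := by simp [Nat.card_Ioc]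
        _ ≤ (k:ℝ) := by exact_mod_cast Nat.sub_le k M
    have hint : ∀ t' : ℝ, Integrable (fun ω => Real.exp (t' * T ω)) μ := by
      intro t'
      refine (integrable_const (Real.exp (|t'| * k))).mono'
        ((hTmeas.const_mul t').exp).aestronglyMeasurable
        (Filter.Eventually.of_forall fun ω => ?_)
      rw [Real.norm_eq_abs, Real.abs_exp]
      apply Real.exp_le_exp.2
      calc t' * T ω ≤ |t' * T ω| := le_abs_self _
        _ = |t'| * |T ω| := abs_mul _ _
        _ ≤ |t'| * k := mul_le_mul_of_nonneg_left (hTbd ω) (abs_nonneg _)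
    -- the sum as a sum over the subtype index
    set s : Finset {j : ℕ // M < j ∧ j ≤ p} :=
      (Finset.Ioc M k).attach.map
        ⟨fun i => ⟨i.1, (Finset.mem_Ioc.1 i.2).1, le_trans (Finset.mem_Ioc.1 i.2).2 hkp⟩,
         fun a b hab => Subtype.ext (by simpa using congrArg Subtype.val hab)⟩ with hsdef
    set Y : {j : ℕ // M < j ∧ j ≤ p} → Ω → ℝ := fun j ω => U j.1 ω - 1/2 with hYdef
    have hYmeas : ∀ j, Measurable (Y j) := fun j => (hUmeas j.1).sub measurable_const
    have hYindep : ProbabilityTheory.iIndepFun Y μ :=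
      hUindep.comp (fun _ x => x - 1/2) (fun _ => measurable_id.sub measurable_const)
    have hTsum : T = ∑ j ∈ s, Y j := by
      funext ω
      rw [Finset.sum_apply]
      simp only [hsdef, Finset.sum_map, Function.Embedding.coeFn_mk, hYdef]
      rw [hTdef]
      exact (Finset.sum_attach (Finset.Ioc M k) (fun i => U i ω - 1/2)).symm
    have hcard : s.card = k - M := by simp [hsdef, Nat.card_Ioc]
    have hmgf : ProbabilityTheory.mgf T μ (4*ε) ≤ Real.exp ((4*ε)^2/8) ^ k := by
      rw [hTsum, hYindep.mgf_sum hYmeas s]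
      calc ∏ j ∈ s, ProbabilityTheory.mgf (Y j) μ (4*ε)
          ≤ ∏ j ∈ s, Real.exp ((4*ε)^2/8) :=
            Finset.prod_le_prod (fun j _ => ProbabilityTheory.mgf_nonneg)
              (fun j _ => mgf_bernoulli_centered μ (U j.1) (hUmeas j.1)
                (hUvals j.1 j.2.1 j.2.2) (hUhalf j.1 j.2.1 j.2.2) _)
        _ = Real.exp ((4*ε)^2/8) ^ s.card := Finset.prod_const _
        _ ≤ Real.exp ((4*ε)^2/8) ^ k := by
            apply pow_le_pow_right₀ (Real.one_le_exp (by positivity))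
            rw [hcard]; omega
    have htk0 : (0:ℝ) ≤ 4*ε := by linarith
    have hchern := ProbabilityTheory.measure_ge_le_exp_mul_mgf (μ := μ) (X := T)
      (t := 4*ε) (ε * k) htk0 (hint (4*ε))
    have hmono : (μ {ω | (k:ℝ) - (∑ i ∈ Finset.Icc 1 k, U i ω) + 1
        ≤ q * ∑ i ∈ Finset.Icc 1 k, U i ω}).toReal
        ≤ (μ {ω | ε * k ≤ T ω}).toReal :=
      ENNReal.toReal_mono (measure_ne_top _ _) (measure_mono hincl)
    calc (μ {ω | (k:ℝ) - (∑ i ∈ Finset.Icc 1 k, U i ω) + 1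
        ≤ q * ∑ i ∈ Finset.Icc 1 k, U i ω}).toReal
        ≤ (μ {ω | ε * k ≤ T ω}).toReal := hmono
      _ ≤ Real.exp (-(4*ε) * (ε*k)) * ProbabilityTheory.mgf T μ (4*ε) := hchern
      _ ≤ Real.exp (-(4*ε) * (ε*k)) * Real.exp ((4*ε)^2/8) ^ k :=
          mul_le_mul_of_nonneg_left hmgf (Real.exp_pos _).le
      _ = ρ ^ k := by
          rw [hρdef, ← Real.exp_nat_mul, ← Real.exp_nat_mul, ← Real.exp_add]
          congr 1
          ring
  -- the events B k and the dominating function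
  set B : ℕ → Set Ω := fun k => {ω | N < k ∧ ((k:ℝ) - (∑ i ∈ Finset.Icc 1 k, U i ω) + 1
      ≤ q * ∑ i ∈ Finset.Icc 1 k, U i ω)} with hBdef
  have hBeq : ∀ k, N < k → B k = {ω | (k:ℝ) - (∑ i ∈ Finset.Icc 1 k, U i ω) + 1
      ≤ q * ∑ i ∈ Finset.Icc 1 k, U i ω} := by
    intro k hNk
    ext ω
    simp [hBdef, hNk]
  have hBempty : ∀ k, ¬ (N < k) → B k = ∅ := by
    intro k hNk
    ext ω
    simp [hBdef, hNk]
  have hBmeas : ∀ k, MeasurableSet (B k) := by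
    intro k
    by_cases hNk : N < k
    · rw [hBeq k hNk]
      have hS : Measurable fun ω => ∑ i ∈ Finset.Icc 1 k, U i ω :=
        Finset.measurable_sum _ (fun i _ => hUmeas i)
      exact measurableSet_le ((measurable_const.sub hS).add measurable_const)
        (hS.const_mul q)
    · rw [hBempty k hNk]; exact MeasurableSet.empty
  have hind_int : ∀ k, Integrable (fun ω => Set.indicator (B k) (fun _ => (k:ℝ)) ω) μ :=
    fun k => (integrable_const _).indicator (hBmeas k)
  have hg_int : Integrable (fun ω => (N:ℝ)
      + ∑ k ∈ Finset.Icc 1 p, Set.indicator (B k) (fun _ => (k:ℝ)) ω) μ :=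
    (integrable_const _).add (integrable_finset_sum _ (fun k _ => hind_int k))
  have hpt : ∀ ω, (seqStepPsi p q (fun i => U i ω) : ℝ) ≤ (N:ℝ)
      + ∑ k ∈ Finset.Icc 1 p, Set.indicator (B k) (fun _ => (k:ℝ)) ω := by
    intro ω
    refine le_trans (seqStepPsi_le_aux p N q (fun i => U i ω)) (le_of_eq ?_)
    congr 1
    refine Finset.sum_congr rfl fun k _ => ?_
    by_cases h : N < k ∧ ((k:ℝ) - (∑ i ∈ Finset.Icc 1 k, U i ω) + 1
        ≤ q * ∑ i ∈ Finset.Icc 1 k, U i ω)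
    · rw [if_pos h, Set.indicator_of_mem (show ω ∈ B k from h)]
    · rw [if_neg h, Set.indicator_of_notMem (show ω ∉ B k from h)]
  have step1 : ∫ ω, (seqStepPsi p q (fun i => U i ω) : ℝ) ∂μ
      ≤ ∫ ω, ((N:ℝ) + ∑ k ∈ Finset.Icc 1 p, Set.indicator (B k) (fun _ => (k:ℝ)) ω) ∂μ :=
    integral_mono_of_nonneg (Filter.Eventually.of_forall fun ω => Nat.cast_nonneg _)
      hg_int (Filter.Eventually.of_forall hpt)
  have step2 : ∫ ω, ((N:ℝ) + ∑ k ∈ Finset.Icc 1 p,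
        Set.indicator (B k) (fun _ => (k:ℝ)) ω) ∂μ
      = (N:ℝ) + ∑ k ∈ Finset.Icc 1 p, (μ (B k)).toReal * k := by
    rw [integral_add (integrable_const _) (integrable_finset_sum _ (fun k _ => hind_int k)),
      integral_const]
    simp only [measure_univ, measureReal_def, ENNReal.toReal_one, one_smul]
    congr 1
    rw [integral_finset_sum _ (fun k _ => hind_int k)]
    refine Finset.sum_congr rfl fun k _ => ?_
    rw [integral_indicator_const _ (hBmeas k), measureReal_def, smul_eq_mul]
  have step3 : ∑ k ∈ Finset.Icc 1 p, (μ (B k)).toReal * k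
      ≤ ∑ k ∈ Finset.Icc 1 p, (k:ℝ) * ρ ^ k := by
    refine Finset.sum_le_sum fun k hk => ?_
    by_cases hNk : N < k
    · rw [hBeq k hNk, mul_comm]
      exact mul_le_mul_of_nonneg_left (key k hNk (Finset.mem_Icc.1 hk).2) (Nat.cast_nonneg _)
    · rw [hBempty k hNk]
      simp only [measure_empty, ENNReal.toReal_zero, zero_mul]
      positivity
  have step4 : ∑ k ∈ Finset.Icc 1 p, (k:ℝ) * ρ ^ k ≤ C₁ :=
    hsum.sum_le_tsum _ (fun k _ => by positivity)
  have hNcast : (N:ℝ) = (c:ℝ) * M := by rw [hNdef]; push_cast; ring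
  have hM1 : (1:ℝ) ≤ (M:ℝ) := by exact_mod_cast hM
  have hfinal : ∫ ω, (seqStepPsi p q (fun i => U i ω) : ℝ) ∂μ ≤ (N:ℝ) + C₁ := by
    rw [step2] at step1
    linarith
  rw [hNcast] at hfinal
  nlinarith
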